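/- If a bounded net (x_α) in a CAT(0) space X converges weakly to a point x ∈ X, then (x_α) converges to x with respect to the weak topology T_Δ. -/

import Mathlib

open Filter Topology Metric Set

/-- `m` is a midpoint of `x` and `y`. -/
def IsMidpoint {X : Type*} [MetricSpace X] (x y m : X) : Prop :=
  dist x m = dist x y / 2 ∧ dist y m = dist x y / 2

/-- A CAT(0) space: a complete metric space with midpoints satisfying the
CN-inequality of Bruhat–Tits. -/
def IsCAT0 (X : Type*) [MetricSpace X] : Prop :=
  CompleteSpace X ∧
    (∀ x y : X, ∃ m : X, IsMidpoint x y m) ∧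
    (∀ x y z m : X, IsMidpoint x y m →
      dist z m ^ 2 ≤ dist z x ^ 2 / 2 + dist z y ^ 2 / 2 - dist x y ^ 2 / 4)

/-- `G` is a (compact) geodesic segment starting at `x`: the image of an
isometric embedding of a compact interval `[0, L]` whose left endpoint is
mapped to `x`. -/
def IsGeodesicSegmentFrom {X : Type*} [MetricSpace X] (x : X) (G : Set X) : Prop :=
  ∃ (L : ℝ) (γ : ℝ → X), 0 ≤ L ∧ γ 0 = x ∧
    (∀ s ∈ Icc (0:ℝ) L, ∀ t ∈ Icc (0:ℝ) L, dist (γ s) (γ t) = |s - t|) ∧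
    G = γ '' Icc (0:ℝ) L

/-- `G` is a geodesic segment from `x` to `y`. -/
def IsGeodesicSegmentBetween {X : Type*} [MetricSpace X] (x y : X) (G : Set X) : Prop :=
  ∃ γ : ℝ → X, γ 0 = x ∧ γ (dist x y) = y ∧
    (∀ s ∈ Icc (0:ℝ) (dist x y), ∀ t ∈ Icc (0:ℝ) (dist x y),
      dist (γ s) (γ t) = |s - t|) ∧
    G = γ '' Icc (0:ℝ) (dist x y)

/-- `p` is a nearest point of `C` to `z` (a closest-point projection of `z`
onto `C`). -/
def IsNearestPoint {X : Type*} [MetricSpace X] (z : X) (C : Set X) (p : X) : Prop :=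
  p ∈ C ∧ ∀ q ∈ C, dist z p ≤ dist z q

/-- Weak (Δ-)convergence of a net `u` (indexed by a preordered set) to `x`:
for every geodesic segment `G` starting at `x`, the closest-point projections
of the `u i` onto `G` converge to `x` in the metric. -/
def WeakConv {X : Type*} [MetricSpace X] {I : Type*} [Preorder I]
    (u : I → X) (x : X) : Prop :=
  ∀ G : Set X, IsGeodesicSegmentFrom x G →
    ∀ p : I → X, (∀ i, IsNearestPoint (u i) G (p i)) → Tendsto p atTop (𝓝 x)

/-- The sets that are closed in the weak topology `T_Δ`: sets containing all
weak limits of bounded sequences of their elements. -/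
def TdeltaClosed {X : Type*} [MetricSpace X] (A : Set X) : Prop :=
  ∀ u : ℕ → X, (∀ n, u n ∈ A) → Bornology.IsBounded (Set.range u) →
    ∀ x : X, WeakConv u x → x ∈ A

/-- `T` is the weak topology `T_Δ`: its closed sets are exactly the weakly
sequentially closed sets. -/
def IsWeakTopology {X : Type*} [MetricSpace X] (T : TopologicalSpace X) : Prop :=
  ∀ A : Set X, @IsClosed X T A ↔ TdeltaClosed A

/-- Geodesic convexity of a subset of a metric space. -/
def GeodesicallyConvex {X : Type*} [MetricSpace X] (C : Set X) : Prop :=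
  ∀ x ∈ C, ∀ y ∈ C, ∀ G : Set X, IsGeodesicSegmentBetween x y G → G ⊆ C

/-- The coconvex topology `T_co`: the coarsest topology on `X` in which every
metrically closed, (geodesically) convex set is closed. -/
def coconvexTopology (X : Type*) [MetricSpace X] : TopologicalSpace X :=
  TopologicalSpace.generateFrom
    {U : Set X | ∃ C : Set X, IsClosed C ∧ GeodesicallyConvex C ∧ U = Cᶜ}

section Aux
variable {X : Type*} [MetricSpace X]

noncomputable def mp (hm : ∀ x y : X, ∃ m, IsMidpoint x y m) (a b : X) : X :=
  (hm a b).choose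

lemma mp_spec (hm : ∀ x y : X, ∃ m, IsMidpoint x y m) (a b : X) :
    IsMidpoint a b (mp hm a b) := (hm a b).choose_spec

lemma dist_mp_left (hm : ∀ x y : X, ∃ m, IsMidpoint x y m) (a b : X) :
    dist a (mp hm a b) = dist a b / 2 := (mp_spec hm a b).1

lemma dist_mp_right (hm : ∀ x y : X, ∃ m, IsMidpoint x y m) (a b : X) :
    dist b (mp hm a b) = dist a b / 2 := (mp_spec hm a b).2

/-- dyadic points on the geodesic from x to y -/
noncomputable def gdy (hm : ∀ x y : X, ∃ m, IsMidpoint x y m) (x y : X) : ℕ → ℕ → X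
  | 0, k => if k = 0 then x else y
  | (m+1), k => if k % 2 = 0 then gdy hm x y m (k / 2)
      else mp hm (gdy hm x y m (k / 2)) (gdy hm x y m (k / 2 + 1))

variable (hm : ∀ x y : X, ∃ m, IsMidpoint x y m) (x y : X)

lemma gdy_zero : ∀ m, gdy hm x y m 0 = x := by
  intro m; induction m with
  | zero => simp [gdy]
  | succ m ih => simp [gdy, ih]

lemma gdy_top : ∀ m, gdy hm x y m (2^m) = y := by
  intro m; induction m with
  | zero => simp [gdy]
  | succ m ih =>
      have h2 : (2^(m+1)) % 2 = 0 := by omega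
      have h3 : (2^(m+1)) / 2 = 2^m := by omega
      simp [gdy, h2, h3, ih]

lemma gdy_dist : ∀ m k k', k ≤ k' → k' ≤ 2^m →
    dist (gdy hm x y m k) (gdy hm x y m k') = ((k':ℝ) - k) * dist x y / 2^m := by
  intro m
  induction m with
  | zero =>
      intro k k' hkk' h2
      have h1 : (2:ℕ)^0 = 1 := rfl
      rw [h1] at h2
      interval_cases k' <;> interval_cases k <;> simp [gdy]
  | succ m IH =>
      have adj : ∀ k, k + 1 ≤ 2^(m+1) →
          dist (gdy hm x y (m+1) k) (gdy hm x y (m+1) (k+1)) = dist x y / 2^(m+1) := by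
        intro k hk
        rcases Nat.even_or_odd k with ⟨l, hl⟩ | ⟨l, hl⟩
        · -- k = 2l even
          subst hl
          have e1 : (l + l) % 2 = 0 := by omega
          have e2 : (l + l) / 2 = l := by omega
          have o1 : (l + l + 1) % 2 = 1 := by omega
          have o2 : (l + l + 1) / 2 = l := by omega
          have hl1 : l + 1 ≤ 2^m := by
            have : l + l + 1 < 2^(m+1) := by
              rcases Nat.lt_or_ge (l+l+1) (2^(m+1)) with h | h
              · exact h
              · exfalso; have : l + l + 1 = 2^(m+1) := le_antisymm hk h
                omega
            omega
          have hd : dist (gdy hm x y m l) (gdy hm x y m (l+1)) = dist x y / 2^m := by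
            rw [IH l (l+1) (by omega) hl1]; push_cast; ring
          simp only [gdy, e1, e2, o1, o2]
          norm_num
          rw [dist_mp_left hm, hd]
          ring
        · -- k = 2l+1 odd
          subst hl
          have o1 : (2*l + 1) % 2 = 1 := by omega
          have o2 : (2*l + 1) / 2 = l := by omega
          have e1 : (2*l + 1 + 1) % 2 = 0 := by omega
          have e2 : (2*l + 1 + 1) / 2 = l + 1 := by omega
          have hl1 : l + 1 ≤ 2^m := by omega
          have hd : dist (gdy hm x y m l) (gdy hm x y m (l+1)) = dist x y / 2^m := by
            rw [IH l (l+1) (by omega) hl1]; push_cast; ring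
          simp only [gdy, o1, o2, e1, e2]
          norm_num
          rw [dist_comm, dist_mp_right hm, hd]
          ring
      -- chain upper bound
      have chain : ∀ k d, k + d ≤ 2^(m+1) →
          dist (gdy hm x y (m+1) k) (gdy hm x y (m+1) (k+d)) ≤ (d:ℝ) * dist x y / 2^(m+1) := by
        intro k d
        induction d with
        | zero => intro _; simp
        | succ d ihd =>
            intro hkd
            have h1 := ihd (by omega)
            have h2 := adj (k + d) (by omega)
            calc dist (gdy hm x y (m+1) k) (gdy hm x y (m+1) (k+(d+1)))
                ≤ dist (gdy hm x y (m+1) k) (gdy hm x y (m+1) (k+d))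
                  + dist (gdy hm x y (m+1) (k+d)) (gdy hm x y (m+1) (k+d+1)) := by
                  have : k + (d+1) = k + d + 1 := by omega
                  rw [this]; exact dist_triangle _ _ _
              _ ≤ (d:ℝ) * dist x y / 2^(m+1) + dist x y / 2^(m+1) := by
                  rw [h2] at *; linarith
              _ = ((d+1 : ℕ):ℝ) * dist x y / 2^(m+1) := by push_cast; ring
      intro k k' hkk' h2
      have hub : dist (gdy hm x y (m+1) k) (gdy hm x y (m+1) k')
          ≤ ((k':ℝ) - k) * dist x y / 2^(m+1) := by
        have hh := chain k (k' - k) (by omega)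
        have hkk : k + (k' - k) = k' := by omega
        rw [hkk] at hh
        have hcast : ((k' - k : ℕ):ℝ) = (k':ℝ) - k := by
          push_cast [Nat.cast_sub hkk']; ring
        rw [hcast] at hh
        exact hh
      have hlb : ((k':ℝ) - k) * dist x y / 2^(m+1)
          ≤ dist (gdy hm x y (m+1) k) (gdy hm x y (m+1) k') := by
        have c1 := chain 0 k (by omega)
        have c2 := chain k' (2^(m+1) - k') (by omega)
        have hk'e : k' + (2^(m+1) - k') = 2^(m+1) := by omega
        rw [hk'e] at c2
        simp only [Nat.zero_add, zero_add] at c1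
        have e0 : gdy hm x y (m+1) 0 = x := gdy_zero hm x y (m+1)
        have etop : gdy hm x y (m+1) (2^(m+1)) = y := gdy_top hm x y (m+1)
        have tri : dist x y ≤ dist x (gdy hm x y (m+1) k)
            + dist (gdy hm x y (m+1) k) (gdy hm x y (m+1) k')
            + dist (gdy hm x y (m+1) k') y := by
          calc dist x y ≤ dist x (gdy hm x y (m+1) k') + dist (gdy hm x y (m+1) k') y :=
                dist_triangle _ _ _
            _ ≤ (dist x (gdy hm x y (m+1) k) + dist (gdy hm x y (m+1) k) (gdy hm x y (m+1) k'))
                + dist (gdy hm x y (m+1) k') y := by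
                  have := dist_triangle x (gdy hm x y (m+1) k) (gdy hm x y (m+1) k')
                  linarith
        have c1' : dist x (gdy hm x y (m+1) k) ≤ (k:ℝ) * dist x y / 2^(m+1) := by
          calc dist x (gdy hm x y (m+1) k)
              = dist (gdy hm x y (m+1) 0) (gdy hm x y (m+1) k) := by rw [e0]
            _ ≤ (k:ℝ) * dist x y / 2^(m+1) := c1
        have c2' : dist (gdy hm x y (m+1) k') y ≤ ((2^(m+1) - k' : ℕ):ℝ) * dist x y / 2^(m+1) := by
          calc dist (gdy hm x y (m+1) k') y
              = dist (gdy hm x y (m+1) k') (gdy hm x y (m+1) (2^(m+1))) := by rw [etop]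
            _ ≤ ((2^(m+1) - k' : ℕ):ℝ) * dist x y / 2^(m+1) := c2
        have hc : ((2^(m+1) - k' : ℕ):ℝ) = (2:ℝ)^(m+1) - k' := by
          push_cast [Nat.cast_sub h2]
          ring
        rw [hc] at c2'
        have h2pos : (0:ℝ) < 2^(m+1) := by positivity
        have key : dist x y ≤ (k:ℝ) * dist x y / 2^(m+1)
            + dist (gdy hm x y (m+1) k) (gdy hm x y (m+1) k')
            + ((2:ℝ)^(m+1) - k') * dist x y / 2^(m+1) := by linarith
        have : ((k':ℝ) - k) * dist x y / 2^(m+1) =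
            dist x y - (k:ℝ) * dist x y / 2^(m+1) - ((2:ℝ)^(m+1) - k') * dist x y / 2^(m+1) := by
          field_simp; ring
        linarith
      linarith


lemma gdy_dist' (m k k' : ℕ) (hk : k ≤ 2^m) (hk' : k' ≤ 2^m) :
    dist (gdy hm x y m k) (gdy hm x y m k') = |(k:ℝ) - k'| * dist x y / 2^m := by
  rcases le_total k k' with h | h
  · rw [gdy_dist hm x y m k k' h hk']
    rw [abs_sub_comm, abs_of_nonneg (sub_nonneg.2 (by exact_mod_cast h))]
  · rw [dist_comm, gdy_dist hm x y m k' k h hk]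
    rw [abs_of_nonneg (sub_nonneg.2 (by exact_mod_cast h))]

lemma floor_facts (a : ℝ) (ha : a ∈ Icc (0:ℝ) 1) (n : ℕ) :
    ⌊a * 2^n⌋₊ ≤ 2^n ∧ |((⌊a * 2^n⌋₊ : ℕ):ℝ) - a * 2^n| ≤ 1 := by
  obtain ⟨ha0, ha1⟩ := ha
  have h2pos : (0:ℝ) < 2^n := by positivity
  have hnn : 0 ≤ a * 2^n := by positivity
  have hfl : ((⌊a * 2^n⌋₊ : ℕ):ℝ) ≤ a * 2^n := Nat.floor_le hnn
  have hfu : a * 2^n < ((⌊a * 2^n⌋₊ : ℕ):ℝ) + 1 := Nat.lt_floor_add_one _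
  constructor
  · have h1 : ((⌊a * 2^n⌋₊ : ℕ):ℝ) ≤ ((2^n : ℕ):ℝ) := by push_cast; nlinarith
    exact_mod_cast h1
  · rw [abs_le]; constructor <;> nlinarith

lemma gdy_cauchy (a : ℝ) (ha : a ∈ Icc (0:ℝ) 1) :
    CauchySeq (fun n => gdy hm x y n ⌊a * 2^n⌋₊) := by
  apply cauchySeq_of_le_geometric (1/2 : ℝ) (3 * dist x y) (by norm_num)
  intro n
  have h2pos : (0:ℝ) < 2^n := by positivity
  have h2pos' : (0:ℝ) < 2^(n+1) := by positivity
  obtain ⟨hb1, hb2⟩ := floor_facts a ha n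
  obtain ⟨hc1, hc2⟩ := floor_facts a ha (n+1)
  set kn := ⌊a * 2^n⌋₊
  set kn1 := ⌊a * 2^(n+1)⌋₊
  have hcompat : gdy hm x y (n+1) (2 * kn) = gdy hm x y n kn := by
    have e1 : (2 * kn) % 2 = 0 := by omega
    have e2 : (2 * kn) / 2 = kn := by omega
    simp [gdy, e1, e2]
  have hk2 : 2 * kn ≤ 2^(n+1) := by
    have : (2:ℕ)^(n+1) = 2 * 2^n := by ring
    omega
  have hd := gdy_dist' hm x y (n+1) (2*kn) kn1 hk2 hc1
  rw [hcompat] at hd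
  have e1' := hb2
  have e2' := hc2
  have habs : |((2 * kn : ℕ):ℝ) - kn1| ≤ 3 := by
    have h21 : ((2 * kn : ℕ):ℝ) = 2 * ((kn:ℕ):ℝ) := by push_cast; ring
    have h23 : a * 2^(n+1) = 2 * (a * 2^n) := by ring
    rw [abs_le] at e1' e2'
    rw [h21, abs_le]
    constructor <;> linarith [e1'.1, e1'.2, e2'.1, e2'.2, h23]
  calc dist (gdy hm x y n kn) (gdy hm x y (n+1) kn1)
      = |((2 * kn : ℕ):ℝ) - kn1| * dist x y / 2^(n+1) := hd
    _ ≤ 3 * dist x y / 2^(n+1) := by gcongr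
    _ ≤ 3 * dist x y * (1/2)^n := by
        rw [one_div_pow, mul_one_div]
        apply div_le_div_of_nonneg_left (by positivity) h2pos
        exact pow_le_pow_right₀ one_le_two (Nat.le_succ n)


lemma floor_div_tendsto (a : ℝ) (ha : a ∈ Icc (0:ℝ) 1) :
    Tendsto (fun n : ℕ => ((⌊a*2^n⌋₊:ℕ):ℝ)/2^n) atTop (𝓝 a) := by
  have hb0 : Tendsto (fun n : ℕ => (1:ℝ)/2^n) atTop (𝓝 0) := by
    simpa [one_div_pow] using
      tendsto_pow_atTop_nhds_zero_of_lt_one (by norm_num : (0:ℝ) ≤ 1/2) (by norm_num)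
  refine tendsto_of_tendsto_of_tendsto_of_le_of_le
    (g := fun n : ℕ => a - 1/2^n) (h := fun n : ℕ => a + 1/2^n) ?_ ?_ ?_ ?_
  · simpa using tendsto_const_nhds.sub hb0
  · simpa using tendsto_const_nhds.add hb0
  · intro n
    have h2pos : (0:ℝ) < 2^n := by positivity
    have hf := (floor_facts a ha n).2
    rw [abs_le] at hf
    rw [sub_le_iff_le_add, div_add' _ _ _ (ne_of_gt h2pos), le_div_iff₀ h2pos]
    have hone : (1:ℝ)/2^n * 2^n = 1 := by field_simp
    nlinarith [hf.1, hone]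
  · intro n
    have h2pos : (0:ℝ) < 2^n := by positivity
    have hf := (floor_facts a ha n).2
    rw [abs_le] at hf
    rw [div_le_iff₀ h2pos]
    have hone : (1:ℝ)/2^n * 2^n = 1 := by field_simp
    have hexp : (a + 1/2^n) * 2^n = a * 2^n + 1/2^n * 2^n := by ring
    nlinarith [hf.2, hone, hexp]

lemma exists_geodesic {X : Type*} [MetricSpace X] [CompleteSpace X]
    (hm : ∀ x y : X, ∃ m, IsMidpoint x y m) (x y : X) :
    ∃ γ : ℝ → X, γ 0 = x ∧
      (∀ s ∈ Icc (0:ℝ) (dist x y), ∀ t ∈ Icc (0:ℝ) (dist x y), dist (γ s) (γ t) = |s - t|) ∧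
      y ∈ γ '' Icc (0:ℝ) (dist x y) := by
  have hlim : ∀ a ∈ Icc (0:ℝ) 1, ∃ z, Tendsto (fun n => gdy hm x y n ⌊a*2^n⌋₊) atTop (𝓝 z) :=
    fun a ha => cauchySeq_tendsto_of_complete (gdy_cauchy hm x y a ha)
  set φ : ∀ a, a ∈ Icc (0:ℝ) 1 → X := fun a ha => (hlim a ha).choose with hφdef
  have hφ : ∀ a (ha : a ∈ Icc (0:ℝ) 1),
      Tendsto (fun n => gdy hm x y n ⌊a*2^n⌋₊) atTop (𝓝 (φ a ha)) :=
    fun a ha => (hlim a ha).choose_spec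
  have hzero : ∀ a (ha : a ∈ Icc (0:ℝ) 1), a = 0 → φ a ha = x := by
    rintro a ha rfl
    refine tendsto_nhds_unique (hφ 0 ha) ?_
    have he : (fun n => gdy hm x y n ⌊(0:ℝ)*2^n⌋₊) = fun _ => x := by
      funext n; simp [gdy_zero hm x y n]
    rw [he]; exact tendsto_const_nhds
  have hone : ∀ a (ha : a ∈ Icc (0:ℝ) 1), a = 1 → φ a ha = y := by
    rintro a ha rfl
    refine tendsto_nhds_unique (hφ 1 ha) ?_
    have he : (fun n => gdy hm x y n ⌊(1:ℝ)*2^n⌋₊) = fun _ => y := by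
      funext n
      have h1 : ((1:ℝ) * 2^n) = ((2^n : ℕ) : ℝ) := by push_cast; ring
      rw [h1, Nat.floor_natCast, gdy_top hm x y n]
    rw [he]; exact tendsto_const_nhds
  have hdistφ : ∀ a (ha : a ∈ Icc (0:ℝ) 1) b (hb : b ∈ Icc (0:ℝ) 1),
      dist (φ a ha) (φ b hb) = |a - b| * dist x y := by
    intro a ha b hb
    have h1 : Tendsto (fun n => dist (gdy hm x y n ⌊a*2^n⌋₊) (gdy hm x y n ⌊b*2^n⌋₊))
        atTop (𝓝 (dist (φ a ha) (φ b hb))) := (hφ a ha).dist (hφ b hb)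
    have h2 : ∀ n, dist (gdy hm x y n ⌊a*2^n⌋₊) (gdy hm x y n ⌊b*2^n⌋₊)
        = |((⌊a*2^n⌋₊:ℕ):ℝ)/2^n - ((⌊b*2^n⌋₊:ℕ):ℝ)/2^n| * dist x y := by
      intro n
      have h2pos : (0:ℝ) < 2^n := by positivity
      rw [gdy_dist' hm x y n _ _ (floor_facts a ha n).1 (floor_facts b hb n).1]
      rw [div_sub_div_same, abs_div, abs_of_pos h2pos]
      field_simp
    have h3 : Tendsto (fun n : ℕ => |((⌊a*2^n⌋₊:ℕ):ℝ)/2^n - ((⌊b*2^n⌋₊:ℕ):ℝ)/2^n| * dist x y)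
        atTop (𝓝 (|a - b| * dist x y)) :=
      (((floor_div_tendsto a ha).sub (floor_div_tendsto b hb)).abs).mul_const _
    exact tendsto_nhds_unique (h1.congr h2) h3
  refine ⟨fun s => if hs : s / dist x y ∈ Icc (0:ℝ) 1 then φ (s / dist x y) hs else x, ?_, ?_, ?_⟩
  · have h0 : (0:ℝ) / dist x y ∈ Icc (0:ℝ) 1 := by
      rw [zero_div]; exact ⟨le_refl 0, by norm_num⟩
    show (if hs : (0:ℝ) / dist x y ∈ Icc (0:ℝ) 1 then φ ((0:ℝ)/dist x y) hs else x) = x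
    rw [dif_pos h0]
    exact hzero _ h0 (zero_div _)
  · intro s hs t ht
    rcases eq_or_lt_of_le (dist_nonneg : (0:ℝ) ≤ dist x y) with hL0 | hLpos
    · have hs0 : s = 0 := le_antisymm (hL0 ▸ hs.2) hs.1
      have ht0 : t = 0 := le_antisymm (hL0 ▸ ht.2) ht.1
      subst hs0; subst ht0; simp
    · have hs' : s / dist x y ∈ Icc (0:ℝ) 1 :=
        ⟨div_nonneg hs.1 (le_of_lt hLpos), (div_le_one hLpos).2 hs.2⟩
      have ht' : t / dist x y ∈ Icc (0:ℝ) 1 :=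
        ⟨div_nonneg ht.1 (le_of_lt hLpos), (div_le_one hLpos).2 ht.2⟩
      show dist (if hc : s / dist x y ∈ Icc (0:ℝ) 1 then φ (s/dist x y) hc else x)
        (if hc : t / dist x y ∈ Icc (0:ℝ) 1 then φ (t/dist x y) hc else x) = |s - t|
      rw [dif_pos hs', dif_pos ht', hdistφ _ hs' _ ht']
      rw [div_sub_div_same, abs_div, abs_of_pos hLpos]
      field_simp
  · refine ⟨dist x y, ⟨dist_nonneg, le_refl _⟩, ?_⟩
    rcases eq_or_lt_of_le (dist_nonneg : (0:ℝ) ≤ dist x y) with hL0 | hLpos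
    · have hxy : y = x := by
        rw [eq_comm, ← dist_eq_zero]; exact hL0.symm
      have h0 : dist x y / dist x y ∈ Icc (0:ℝ) 1 := by
        rw [← hL0, zero_div]; exact ⟨le_refl 0, by norm_num⟩
      show (if hc : dist x y / dist x y ∈ Icc (0:ℝ) 1 then φ (dist x y/dist x y) hc else x) = y
      rw [dif_pos h0]
      exact (hzero _ h0 (by rw [← hL0, zero_div])).trans hxy.symm
    · have h1 : dist x y / dist x y ∈ Icc (0:ℝ) 1 := by
        rw [div_self (ne_of_gt hLpos)]; exact ⟨by norm_num, le_refl 1⟩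
      show (if hc : dist x y / dist x y ∈ Icc (0:ℝ) 1 then φ (dist x y/dist x y) hc else x) = y
      rw [dif_pos h1]
      exact hone _ h1 (div_self (ne_of_gt hLpos))


lemma exists_nearest {X : Type*} [MetricSpace X] {x : X} {G : Set X}
    (hG : IsGeodesicSegmentFrom x G) (z : X) : ∃ p, IsNearestPoint z G p := by
  obtain ⟨L, γ, hL, hγ0, hiso, hGeq⟩ := hG
  have hcont : ContinuousOn (fun t => dist z (γ t)) (Icc (0:ℝ) L) := by
    have hlip : LipschitzOnWith 1 (fun t => dist z (γ t)) (Icc (0:ℝ) L) := by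
      intro s hs t ht
      rw [edist_dist, edist_dist, Real.dist_eq]
      have h1 : dist (dist z (γ s)) (dist z (γ t)) ≤ dist (γ s) (γ t) := by
        rw [Real.dist_eq, dist_comm z (γ s), dist_comm z (γ t)]
        exact abs_dist_sub_le (γ s) (γ t) z
      rw [hiso s hs t ht] at h1
      calc ENNReal.ofReal (dist (dist z (γ s)) (dist z (γ t)))
          ≤ ENNReal.ofReal |s - t| := ENNReal.ofReal_le_ofReal h1
        _ ≤ 1 * ENNReal.ofReal |s - t| := by rw [one_mul]
    exact hlip.continuousOn
  obtain ⟨t0, ht0, hmin⟩ := isCompact_Icc.exists_isMinOn (nonempty_Icc.2 hL) hcont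
  refine ⟨γ t0, ?_, ?_⟩
  · rw [hGeq]; exact mem_image_of_mem γ ht0
  · intro q hq
    rw [hGeq] at hq
    obtain ⟨s, hs, rfl⟩ := hq
    exact hmin hs

lemma nearest_gap {X : Type*} [MetricSpace X]
    (hcn : ∀ x y z m : X, IsMidpoint x y m →
      dist z m ^ 2 ≤ dist z x ^ 2 / 2 + dist z y ^ 2 / 2 - dist x y ^ 2 / 4)
    {x z p : X} {G : Set X} {L : ℝ} {γ : ℝ → X} (hL : 0 ≤ L) (hγ0 : γ 0 = x)
    (hiso : ∀ s ∈ Icc (0:ℝ) L, ∀ t ∈ Icc (0:ℝ) L, dist (γ s) (γ t) = |s - t|)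
    (hGeq : G = γ '' Icc (0:ℝ) L) (hp : IsNearestPoint z G p) :
    dist z p ^ 2 + dist p x ^ 2 / 2 ≤ dist z x ^ 2 := by
  obtain ⟨hpG, hpmin⟩ := hp
  rw [hGeq] at hpG
  obtain ⟨t, ht, rfl⟩ := hpG
  have h0 : (0:ℝ) ∈ Icc (0:ℝ) L := ⟨le_refl 0, hL⟩
  have ht2 : t/2 ∈ Icc (0:ℝ) L := ⟨by linarith [ht.1], by linarith [ht.1, ht.2]⟩
  have hdxp : dist x (γ t) = t := by
    rw [← hγ0, hiso 0 h0 t ht]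
    rw [abs_sub_comm, abs_of_nonneg (by linarith [ht.1] : (0:ℝ) ≤ t - 0)]
    ring
  have hdxm : dist x (γ (t/2)) = t/2 := by
    rw [← hγ0, hiso 0 h0 (t/2) ht2]
    rw [abs_sub_comm, abs_of_nonneg (by linarith [ht.1] : (0:ℝ) ≤ t/2 - 0)]
    ring
  have hdpm : dist (γ t) (γ (t/2)) = t/2 := by
    rw [hiso t ht (t/2) ht2, abs_of_nonneg (by linarith [ht.1] : (0:ℝ) ≤ t - t/2)]
    ring
  have hmid : IsMidpoint x (γ t) (γ (t/2)) := by
    constructor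
    · rw [hdxm, hdxp]
    · rw [hdpm, hdxp]
  have hcn' := hcn x (γ t) z (γ (t/2)) hmid
  have hminm : dist z (γ t) ≤ dist z (γ (t/2)) := by
    apply hpmin
    rw [hGeq]; exact mem_image_of_mem γ ht2
  have hsq : dist z (γ t) ^ 2 ≤ dist z (γ (t/2)) ^ 2 := by
    nlinarith [hminm, dist_nonneg (x := z) (y := γ t), dist_nonneg (x := z) (y := γ (t/2))]
  have hd : dist (γ t) x = t := by rw [dist_comm]; exact hdxp
  rw [hd]
  rw [hdxp] at hcn'
  nlinarith [hcn', hsq]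

/-- iterated midpoint sets -/
noncomputable def midIter {X : Type*} [MetricSpace X]
    (hm : ∀ x y : X, ∃ m, IsMidpoint x y m) (S : Set X) : ℕ → Set X
  | 0 => S
  | (k+1) => midIter hm S k ∪ Set.image2 (mp hm) (midIter hm S k) (midIter hm S k)

noncomputable def midHull {X : Type*} [MetricSpace X]
    (hm : ∀ x y : X, ∃ m, IsMidpoint x y m) (S : Set X) : Set X :=
  ⋃ k, midIter hm S k

section MidIter
variable {X : Type*} [MetricSpace X] (hm : ∀ x y : X, ∃ m, IsMidpoint x y m)

lemma midIter_mono_k {S : Set X} : ∀ {k k' : ℕ}, k ≤ k' → midIter hm S k ⊆ midIter hm S k' := by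
  intro k k' hkk'
  induction k' with
  | zero => have : k = 0 := Nat.le_zero.1 hkk'; subst this; exact subset_rfl
  | succ k' ih =>
      rcases Nat.lt_or_ge k (k'+1) with h | h
      · exact (ih (by omega)).trans (subset_union_left)
      · have : k = k' + 1 := by omega
        subst this; exact subset_rfl

lemma midIter_mono_S {S T : Set X} (hST : S ⊆ T) :
    ∀ k, midIter hm S k ⊆ midIter hm T k := by
  intro k
  induction k with
  | zero => exact hST
  | succ k ih =>
      apply union_subset_union ih
      intro z hz
      obtain ⟨a, ha, b, hb, rfl⟩ := hz
      exact ⟨a, ih ha, b, ih hb, rfl⟩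

lemma subset_midHull (S : Set X) : S ⊆ midHull hm S :=
  subset_iUnion (fun k => midIter hm S k) 0

lemma midHull_midClosed {S : Set X} {a b : X} (ha : a ∈ midHull hm S) (hb : b ∈ midHull hm S) :
    mp hm a b ∈ midHull hm S := by
  obtain ⟨_, ⟨k, rfl⟩, hak⟩ := ha
  obtain ⟨_, ⟨l, rfl⟩, hbl⟩ := hb
  have ha' : a ∈ midIter hm S (max k l) := midIter_mono_k hm (le_max_left k l) hak
  have hb' : b ∈ midIter hm S (max k l) := midIter_mono_k hm (le_max_right k l) hbl
  exact mem_iUnion.2 ⟨max k l + 1, Or.inr ⟨a, ha', b, hb', rfl⟩⟩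

lemma midIter_finite {S : Set X} (hS : S.Finite) (k : ℕ) : (midIter hm S k).Finite := by
  induction k with
  | zero => exact hS
  | succ k ih => exact ih.union (ih.image2 _ ih)

lemma midIter_ball {c : X} {r : ℝ}
    (hcn : ∀ x y z m : X, IsMidpoint x y m →
      dist z m ^ 2 ≤ dist z x ^ 2 / 2 + dist z y ^ 2 / 2 - dist x y ^ 2 / 4)
    {S : Set X} (hS : ∀ a ∈ S, dist a c ≤ r) (hr : 0 ≤ r) :
    ∀ k, ∀ a ∈ midIter hm S k, dist a c ≤ r := by
  intro k
  induction k with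
  | zero => exact hS
  | succ k ih =>
      rintro a (ha | ⟨a1, ha1, a2, ha2, rfl⟩)
      · exact ih a ha
      · have hcn' := hcn a1 a2 c (mp hm a1 a2) (mp_spec hm a1 a2)
        have h1 := ih a1 ha1
        have h2 := ih a2 ha2
        have hd : dist (mp hm a1 a2) c ^ 2 ≤ r ^ 2 := by
          rw [dist_comm] at h1 h2 ⊢
          nlinarith [sq_nonneg (dist a1 a2), dist_nonneg (x := c) (y := a1),
            dist_nonneg (x := c) (y := a2)]
        nlinarith [hd, dist_nonneg (x := mp hm a1 a2) (y := c), hr]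

lemma midHull_ball {c : X} {r : ℝ}
    (hcn : ∀ x y z m : X, IsMidpoint x y m →
      dist z m ^ 2 ≤ dist z x ^ 2 / 2 + dist z y ^ 2 / 2 - dist x y ^ 2 / 4)
    {S : Set X} (hS : ∀ a ∈ S, dist a c ≤ r) (hr : 0 ≤ r) :
    ∀ a ∈ midHull hm S, dist a c ≤ r := by
  intro a ha
  obtain ⟨_, ⟨k, rfl⟩, hak⟩ := ha
  exact midIter_ball hm hcn hS hr k a hak

end MidIter

lemma final_numeric (a b d σ ε r η : ℝ) (h1 : a^2 ≤ (b+σ)^2) (h2 : b^2 ≤ (d+σ)^2 + η)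
    (h3 : d^2 + ε^2/2 ≤ a^2) (hb : b ≤ 2*r) (hdd : d ≤ r)
    (hσ1 : σ ≤ 1) (hσb : σ*(100*(2*r+1)) ≤ ε^2) (hη : η = ε^2/8)
    (hσ0 : 0 ≤ σ) (hr : 0 ≤ r) (hε : 0 < ε) (hd0 : 0 ≤ d) (hb0 : 0 ≤ b) : False := by
  have key : 2*σ*(d + b + σ) ≤ ε^2/25 := by nlinarith
  nlinarith [key, h1, h2, h3]

set_option maxHeartbeats 2000000 in
lemma weakconv_of_ctrl {X : Type*} [MetricSpace X]
    (hm : ∀ x y : X, ∃ m, IsMidpoint x y m)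
    (hcn : ∀ x y z m : X, IsMidpoint x y m →
      dist z m ^ 2 ≤ dist z x ^ 2 / 2 + dist z y ^ 2 / 2 - dist x y ^ 2 / 4)
    (v : ℕ → X) (x : X) (r : ℝ) (hr : 0 ≤ r)
    (hvr : ∀ n, dist (v n) x ≤ r)
    (hctrl : ∀ y ∈ midHull hm (insert x (Set.range v)),
      ∃ N, ∀ n ≥ N, dist (v n) x ≤ dist (v n) y + 1/((n:ℝ)+1)) :
    WeakConv v x := by
  intro G hG p hp
  obtain ⟨L, γ, hL, hγ0, hiso, hGeq⟩ := hG
  by_contra hcon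
  rw [Metric.tendsto_atTop] at hcon
  push_neg at hcon
  obtain ⟨ε, hε, hfr'⟩ := hcon
  have hfr : ∃ᶠ n in atTop, ε ≤ dist (p n) x := by
    rw [frequently_atTop]
    intro a
    obtain ⟨b, hb1, hb2⟩ := hfr' a
    exact ⟨b, hb1, hb2⟩
  obtain ⟨φ, hφmono, hφprop⟩ := Filter.extraction_of_frequently_atTop hfr
  -- parameters of nearest points
  have hpmem : ∀ n, ∃ s, s ∈ Icc (0:ℝ) L ∧ γ s = p n := by
    intro n
    have hmem := (hp n).1
    rw [hGeq] at hmem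
    obtain ⟨s, hs, hse⟩ := hmem
    exact ⟨s, hs, hse⟩
  choose t ht hte using hpmem
  have h0Icc : (0:ℝ) ∈ Icc (0:ℝ) L := ⟨le_refl 0, hL⟩
  have hxG : x ∈ G := by rw [hGeq, ← hγ0]; exact mem_image_of_mem γ h0Icc
  have hdistpx : ∀ n, dist (p n) x = t n := by
    intro n
    rw [← hte n, ← hγ0, hiso _ (ht n) 0 h0Icc, sub_zero,
      abs_of_nonneg (ht n).1]
  -- Bolzano–Weierstrass on parameters along φ
  obtain ⟨tl, htlIcc, ψ, hψmono, hψtend⟩ :=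
    isCompact_Icc.tendsto_subseq (fun k => ht (φ k))
  set m : ℕ → ℕ := fun k => φ (ψ k) with hmdef
  have hmmono : StrictMono m := hφmono.comp hψmono
  have hm_ge : ∀ k, k ≤ m k := fun k => hmmono.le_apply
  have htm : Tendsto (fun k => t (m k)) atTop (𝓝 tl) := hψtend
  have htmε : ∀ k, ε ≤ t (m k) := by
    intro k
    rw [← hdistpx]
    exact hφprop (ψ k)
  have htlε : ε ≤ tl := ge_of_tendsto htm (Eventually.of_forall htmε)
  set ps := γ tl with hpsdef
  have hpps : ∀ n, dist (p n) ps = |t n - tl| := by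
    intro n
    rw [← hte n]
    exact hiso _ (ht n) tl htlIcc
  -- gap inequality
  have hgap : ∀ n, dist (v n) (p n) ^ 2 + (t n) ^ 2 / 2 ≤ dist (v n) x ^ 2 := by
    intro n
    have := nearest_gap hcn hL hγ0 hiso hGeq (hp n)
    rw [hdistpx n] at this
    exact this
  -- the midpoint hull
  set M := midHull hm (insert x (Set.range v)) with hMdef
  have hxM : x ∈ M := subset_midHull hm _ (mem_insert _ _)
  have hvM : ∀ n, v n ∈ M := fun n => subset_midHull hm _ (mem_insert_of_mem _ ⟨n, rfl⟩)
  have hMr : ∀ a ∈ M, dist a x ≤ r := by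
    apply midHull_ball hm hcn _ hr
    rintro a (rfl | ⟨n, rfl⟩)
    · simpa using hr
    · exact hvr n
  -- approximate projection of ps onto M
  set η := ε^2/8 with hηdef
  have hηpos : 0 < η := by positivity
  obtain ⟨j, hjlt⟩ : ∃ j : ℕ, (1/2:ℝ)^j < (η/2)/((2*r+1)^2) := by
    apply exists_pow_lt_of_lt_one
    · positivity
    · norm_num
  have hjbd : (1/2:ℝ)^j * (2*r+1)^2 ≤ η/2 := by
    have h1 : (0:ℝ) < (2*r+1)^2 := by positivity
    rw [lt_div_iff₀ h1] at hjlt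
    exact hjlt.le
  set θ := (η/2) * (1/2)^j with hθdef
  have hθpos : 0 < θ := by positivity
  have hSne : ((fun c => dist ps c ^ 2) '' M).Nonempty := ⟨_, x, hxM, rfl⟩
  have hSbdd : BddBelow ((fun c => dist ps c ^ 2) '' M) := by
    refine ⟨0, ?_⟩
    rintro _ ⟨c, hc, rfl⟩
    positivity
  obtain ⟨aq, ⟨q, hqM, rfl⟩, haq⟩ := Real.lt_sInf_add_pos hSne hθpos
  have hq : ∀ c ∈ M, dist ps q ^ 2 ≤ dist ps c ^ 2 + θ := by
    intro c hc
    have h1 : sInf ((fun c => dist ps c ^ 2) '' M) ≤ dist ps c ^ 2 :=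
      csInf_le hSbdd ⟨c, hc, rfl⟩
    have haq' : dist ps q ^ 2 < sInf ((fun c => dist ps c ^ 2) '' M) + θ := haq
    linarith
  -- approximate Pythagoras
  have pyth : ∀ j' : ℕ, ∀ c ∈ M,
      (1 - (1/2:ℝ)^j') * dist q c ^ 2 ≤ dist ps c ^ 2 - dist ps q ^ 2 + 2^j' * θ := by
    intro j'
    induction j' with
    | zero =>
        intro c hc
        simp only [pow_zero]
        linarith [hq c hc]
    | succ j' ih =>
        intro c hc
        have hw : mp hm q c ∈ M := midHull_midClosed hm hqM hc
        have ihw := ih (mp hm q c) hw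
        have hqw : dist q (mp hm q c) = dist q c / 2 := dist_mp_left hm q c
        have hcnw := hcn q c ps (mp hm q c) (mp_spec hm q c)
        rw [hqw] at ihw
        have e1 : (2:ℝ)^(j'+1) = 2^j' * 2 := pow_succ 2 j'
        have e2 : (1/2:ℝ)^(j'+1) = (1/2)^j' * (1/2) := pow_succ _ _
        rw [e1, e2]
        nlinarith [ihw, hcnw]
  have hqx : dist q x ≤ r := hMr q hqM
  have hqvn : ∀ n, dist (v n) q ≤ 2*r := by
    intro n
    calc dist (v n) q ≤ dist (v n) x + dist x q := dist_triangle _ _ _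
      _ ≤ r + r := add_le_add (hvr n) (by rw [dist_comm]; exact hqx)
      _ = 2*r := by ring
  have happrox : ∀ n, dist (v n) q ^ 2 ≤ dist (v n) ps ^ 2 + η := by
    intro n
    have h1 := pyth j (v n) (hvM n)
    have h2jθ : (2:ℝ)^j * θ = (η/2) * ((2:ℝ)^j * (1/2)^j) := by rw [hθdef]; ring
    have hpow1 : (2:ℝ)^j * (1/2:ℝ)^j = 1 := by
      rw [← mul_pow]; norm_num
    rw [hpow1, mul_one] at h2jθ
    have hsnn : (0:ℝ) ≤ (1/2:ℝ)^j := by positivity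
    have hsb : (1/2:ℝ)^j * dist q (v n) ^ 2 ≤ (1/2:ℝ)^j * (2*r+1)^2 := by
      apply mul_le_mul_of_nonneg_left _ hsnn
      have := hqvn n
      rw [dist_comm q (v n)]
      nlinarith [dist_nonneg (x := v n) (y := q)]
    rw [dist_comm (v n) q, dist_comm (v n) ps]
    nlinarith [h1, hsb, hjbd, sq_nonneg (dist ps q), h2jθ]
  -- choose the index
  obtain ⟨Nq, hNq⟩ := hctrl q hqM
  set σ := min 1 (ε^2/(100*(2*r+1))) with hσdef
  have hσpos : 0 < σ := by
    apply lt_min one_pos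
    positivity
  have hσ1 : σ ≤ 1 := min_le_left _ _
  have hσ2 : σ ≤ ε^2/(100*(2*r+1)) := min_le_right _ _
  obtain ⟨k1, hk1⟩ := (Metric.tendsto_atTop.1 htm) σ hσpos
  obtain ⟨k2, hk2⟩ := exists_nat_one_div_lt hσpos
  set k := max (max k1 Nq) k2 with hkdef
  set n := m k with hndef
  have hkk1 : k1 ≤ k := le_trans (le_max_left _ _) (le_max_left _ _)
  have hkNq : Nq ≤ k := le_trans (le_max_right _ _) (le_max_left _ _)
  have hkk2 : k2 ≤ k := le_max_right _ _
  have hnNq : Nq ≤ n := le_trans hkNq (hm_ge k)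
  have hnk2 : k2 ≤ n := le_trans hkk2 (hm_ge k)
  have hc1 : dist (v n) x ≤ dist (v n) q + 1/((n:ℝ)+1) := hNq n hnNq
  have h1n : 1/((n:ℝ)+1) ≤ σ := by
    have h1 : 1/((n:ℝ)+1) ≤ 1/((k2:ℝ)+1) := by
      apply one_div_le_one_div_of_le
      · positivity
      · exact_mod_cast Nat.succ_le_succ hnk2
    linarith [hk2]
  have he2 : |t n - tl| ≤ σ := by
    have := hk1 k hkk1
    rw [Real.dist_eq] at this
    exact le_of_lt this
  -- numeric contradiction
  have hda : dist (v n) (p n) ≤ dist (v n) x := (hp n).2 x hxG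
  have har : dist (v n) x ≤ r := hvr n
  have htnε : ε ≤ t n := htmε k
  have hA3 : dist (v n) ps ≤ dist (v n) (p n) + σ := by
    calc dist (v n) ps ≤ dist (v n) (p n) + dist (p n) ps := dist_triangle _ _ _
      _ ≤ dist (v n) (p n) + σ := by rw [hpps n]; linarith [he2]
  have hA4 : dist (v n) (p n) ^ 2 + ε^2/2 ≤ dist (v n) x ^ 2 := by
    have := hgap n
    nlinarith [htnε, hε.le]
  have hbb : dist (v n) q ≤ 2*r := hqvn n
  have hd0 : (0:ℝ) ≤ dist (v n) (p n) := dist_nonneg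
  have hb0 : (0:ℝ) ≤ dist (v n) q := dist_nonneg
  have hps0 : (0:ℝ) ≤ dist (v n) ps := dist_nonneg
  have ha0 : (0:ℝ) ≤ dist (v n) x := dist_nonneg
  have hσεbd : σ * (100*(2*r+1)) ≤ ε^2 := by
    have h1 : (0:ℝ) < 100*(2*r+1) := by positivity
    calc σ * (100*(2*r+1)) ≤ (ε^2/(100*(2*r+1))) * (100*(2*r+1)) :=
          mul_le_mul_of_nonneg_right hσ2 h1.le
      _ = ε^2 := by field_simp
  -- combine
  have hfin1 : dist (v n) x ^ 2 ≤ (dist (v n) q + σ)^2 := by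
    nlinarith [hc1, h1n, ha0, hb0, hσpos.le]
  have hfin2 : dist (v n) q ^ 2 ≤ (dist (v n) (p n) + σ)^2 + η := by
    have := happrox n
    nlinarith [hA3, hps0, hd0, hσpos.le]
  exact final_numeric (dist (v n) x) (dist (v n) q) (dist (v n) (p n)) σ ε r η
    hfin1 hfin2 hA4 hbb (le_trans hda har) hσ1 hσεbd hηdef hσpos.le hr hε hd0 hb0


lemma midHull_diag {X : Type*} [MetricSpace X] (hm : ∀ x y : X, ∃ m, IsMidpoint x y m)
    {v : ℕ → X} {x y : X} (hy : y ∈ midHull hm (insert x (Set.range v))) :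
    ∃ N, ∀ n ≥ N, y ∈ midIter hm (insert x (v '' Iio n)) n := by
  obtain ⟨_, ⟨k, rfl⟩, hyk⟩ := hy
  have hsub : ∀ k, ∀ y, y ∈ midIter hm (insert x (Set.range v)) k →
      ∃ mm, y ∈ midIter hm (insert x (v '' Iio mm)) k := by
    intro k
    induction k with
    | zero =>
        rintro y (rfl | ⟨jj, rfl⟩)
        · exact ⟨0, mem_insert _ _⟩
        · exact ⟨jj+1, mem_insert_of_mem _ ⟨jj, by simp, rfl⟩⟩
    | succ k ih =>
        rintro y (hy | ⟨a, ha, b, hb, rfl⟩)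
        · obtain ⟨mm, hmm⟩ := ih y hy
          exact ⟨mm, subset_union_left hmm⟩
        · obtain ⟨ma, hma⟩ := ih a ha
          obtain ⟨mb, hmb⟩ := ih b hb
          refine ⟨max ma mb, Or.inr ⟨a, ?_, b, ?_, rfl⟩⟩
          · exact midIter_mono_S hm (insert_subset_insert
              (image_mono (f := v) (Iio_subset_Iio (le_max_left ma mb)))) k hma
          · exact midIter_mono_S hm (insert_subset_insert
              (image_mono (f := v) (Iio_subset_Iio (le_max_right ma mb)))) k hmb
  obtain ⟨mm, hmm⟩ := hsub k _ hyk
  refine ⟨max k mm, fun n hn => ?_⟩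
  have h1 : midIter hm (insert x (v '' Iio mm)) k ⊆ midIter hm (insert x (v '' Iio n)) k :=
    midIter_mono_S hm (insert_subset_insert (image_mono (f := v) (Iio_subset_Iio
      (le_trans (le_max_right k mm) hn)))) k
  exact midIter_mono_k hm (le_trans (le_max_left k mm) hn) (h1 hmm)

lemma key_construction {X : Type*} [MetricSpace X] (hX : IsCAT0 X)
    {I : Type*} [Preorder I] [IsDirected I (· ≤ ·)] [Nonempty I]
    (u : I → X) (x : X) (r : ℝ) (hr : 0 ≤ r) (hur : ∀ i, dist (u i) x ≤ r)
    (h : WeakConv u x) (A : Set X) (hA : ∀ i₀ : I, ∃ i, i₀ ≤ i ∧ u i ∈ A) :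
    ∃ v : ℕ → X, (∀ n, v n ∈ A) ∧ (∀ n, ∃ i, v n = u i) ∧ WeakConv v x := by
  obtain ⟨hcomp, hm, hcn⟩ := hX
  haveI : CompleteSpace X := hcomp
  -- geodesics from x to each point
  have hgeo : ∀ y : X, ∃ γ : ℝ → X, γ 0 = x ∧
      (∀ s ∈ Icc (0:ℝ) (dist x y), ∀ t ∈ Icc (0:ℝ) (dist x y), dist (γ s) (γ t) = |s - t|) ∧
      y ∈ γ '' Icc (0:ℝ) (dist x y) := fun y => exists_geodesic hm x y
  choose γf hγf0 hγfiso hγfmem using hgeo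
  set Gf : X → Set X := fun y => γf y '' Icc (0:ℝ) (dist x y) with hGfdef
  have hGf : ∀ y, IsGeodesicSegmentFrom x (Gf y) :=
    fun y => ⟨dist x y, γf y, dist_nonneg, hγf0 y, hγfiso y, rfl⟩
  have hyGf : ∀ y, y ∈ Gf y := fun y => hγfmem y
  have hnear : ∀ y z : X, ∃ p, IsNearestPoint z (Gf y) p :=
    fun y z => exists_nearest (hGf y) z
  choose π hπ using hnear
  have hTend : ∀ y, Tendsto (fun i => π y (u i)) atTop (𝓝 x) :=
    fun y => h (Gf y) (hGf y) _ (fun i => hπ y (u i))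
  have hthr : ∀ (y : X) (n : ℕ), ∃ i₀ : I, ∀ i ≥ i₀, dist (π y (u i)) x ≤ 1/((n:ℝ)+1) := by
    intro y n
    have hev : ∀ᶠ i in atTop, π y (u i) ∈ closedBall x (1/((n:ℝ)+1)) :=
      (hTend y) (Metric.closedBall_mem_nhds x (by positivity))
    rw [eventually_atTop] at hev
    obtain ⟨i₀, hi₀⟩ := hev
    exact ⟨i₀, fun i hi => by simpa [Metric.mem_closedBall] using hi₀ i hi⟩
  have hkey : ∀ (n : ℕ) (S : Set X), S.Finite →
      ∃ i : I, u i ∈ A ∧ ∀ y ∈ S, dist (π y (u i)) x ≤ 1/((n:ℝ)+1) := by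
    intro n S hS
    haveI := Classical.decEq I
    choose f hf using fun y : X => hthr y n
    obtain ⟨i₀, hi₀⟩ := (hS.toFinset.image f).exists_le
    obtain ⟨i, hii, hiA⟩ := hA i₀
    refine ⟨i, hiA, fun y hy => ?_⟩
    exact hf y i (le_trans (hi₀ (f y) (Finset.mem_image_of_mem f (hS.mem_toFinset.2 hy))) hii)
  -- the recursive construction
  have hSfin : ∀ (n : ℕ) (l : List I),
      (midIter hm (insert x (u '' {a | a ∈ l})) n).Finite :=
    fun n l => midIter_finite hm ((l.finite_toSet.image u).insert x) n
  let pick : ℕ → List I → I :=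
    fun n l => (hkey n (midIter hm (insert x (u '' {a | a ∈ l})) n) (hSfin n l)).choose
  let pre : ℕ → List I := fun n => Nat.rec [] (fun n l => l ++ [pick n l]) n
  let iseq : ℕ → I := fun n => pick n (pre n)
  set v : ℕ → X := fun n => u (iseq n) with hvdef
  have hpick1 : ∀ n, v n ∈ A :=
    fun n => (hkey n _ (hSfin n (pre n))).choose_spec.1
  have hpick2 : ∀ n, ∀ y ∈ midIter hm (insert x (u '' {a | a ∈ pre n})) n,
      dist (π y (v n)) x ≤ 1/((n:ℝ)+1) :=
    fun n => (hkey n _ (hSfin n (pre n))).choose_spec.2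
  have hpreset : ∀ n, u '' {a | a ∈ pre n} = v '' Iio n := by
    intro n
    induction n with
    | zero =>
        show u '' {a | a ∈ ([] : List I)} = v '' Iio 0
        ext a; simp
    | succ n ih =>
        have hps : pre (n+1) = pre n ++ [iseq n] := rfl
        rw [hps]
        have h1 : {a | a ∈ pre n ++ [iseq n]} = {a | a ∈ pre n} ∪ {iseq n} := by
          ext a; simp [List.mem_append, or_comm]
        have h2 : Iio (n+1) = Iio n ∪ {n} := by
          ext a; simp [Nat.lt_succ_iff_lt_or_eq]
        rw [h1, h2, image_union, image_union, ih]
        congr 1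
        simp [hvdef]
    -- end induction
  have hctrl : ∀ y ∈ midHull hm (insert x (Set.range v)),
      ∃ N, ∀ n ≥ N, dist (v n) x ≤ dist (v n) y + 1/((n:ℝ)+1) := by
    intro y hy
    obtain ⟨N, hN⟩ := midHull_diag hm hy
    refine ⟨N, fun n hn => ?_⟩
    have hyS : y ∈ midIter hm (insert x (u '' {a | a ∈ pre n})) n := by
      rw [hpreset n]; exact hN n hn
    have hproj := hpick2 n y hyS
    have hmin := (hπ y (v n)).2 y (hyGf y)
    calc dist (v n) x ≤ dist (v n) (π y (v n)) + dist (π y (v n)) x := dist_triangle _ _ _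
      _ ≤ dist (v n) y + 1/((n:ℝ)+1) := add_le_add hmin hproj
  refine ⟨v, hpick1, fun n => ⟨iseq n, rfl⟩, ?_⟩
  exact weakconv_of_ctrl hm hcn v x r hr (fun n => hur (iseq n)) hctrl

end Aux

/-- If a bounded net in a CAT(0) space converges weakly to
`x`, then it converges to `x` with respect to the weak topology `T_Δ`. -/
theorem weakConv_net_tendsto_weak_topology
    (X : Type*) [MetricSpace X] (hX : IsCAT0 X)
    (TΔ : TopologicalSpace X) (hTΔ : IsWeakTopology TΔ)
    {I : Type*} [Preorder I] [IsDirected I (· ≤ ·)] [Nonempty I]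
    (u : I → X) (hb : Bornology.IsBounded (Set.range u))
    (x : X) (h : WeakConv u x) :
    Filter.Tendsto u Filter.atTop (@nhds X TΔ x) := by
  rw [Filter.tendsto_def]
  intro s hs
  obtain ⟨U, hUs, hUopen, hxU⟩ := (@_root_.mem_nhds_iff X TΔ x s).1 hs
  have hev : ∀ᶠ i in atTop, u i ∈ U := by
    by_contra hcon
    have hfreq : ∀ i₀ : I, ∃ i, i₀ ≤ i ∧ u i ∈ Uᶜ := by
      rw [Filter.not_eventually] at hcon
      intro i₀
      obtain ⟨b, hb1, hb2⟩ := frequently_atTop.1 hcon i₀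
      exact ⟨b, hb1, hb2⟩
    have hAclosed : TdeltaClosed Uᶜ := (hTΔ Uᶜ).1 (@IsOpen.isClosed_compl X TΔ U hUopen)
    obtain ⟨r0, hr0⟩ := (Metric.isBounded_iff_subset_closedBall x).1 hb
    have hur : ∀ i, dist (u i) x ≤ max r0 0 := fun i =>
      le_trans (Metric.mem_closedBall.1 (hr0 ⟨i, rfl⟩)) (le_max_left _ _)
    obtain ⟨v, hvA, hvu, hvw⟩ :=
      key_construction hX u x (max r0 0) (le_max_right _ _) hur h Uᶜ hfreq
    have hbdd : Bornology.IsBounded (Set.range v) := by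
      apply (Metric.isBounded_closedBall (x := x) (r := max r0 0)).subset
      rintro _ ⟨n, rfl⟩
      obtain ⟨i, hi⟩ := hvu n
      rw [Metric.mem_closedBall, hi]
      exact hur i
    exact absurd hxU (hAclosed v hvA hbdd x hvw)
  exact mem_of_superset hev (fun i hi => hUs hi)
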